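/- (Pure tail constraint optimum) Suppose there is a single tail constraint (γ, 0) with (γ−1) | (n−1), and let t₁ = (n−1)/(γ−1). If f is a probability distribution with f_t = 0 for t < t₁, f_{t₁} = (λ−1)/(γ−1), and f_t = (γ(λ−1)/((n−1)(γ−1)))·(1+1/(n−1))^{t−t₁−1} for t > t₁, then the normalization Σ_t f_t = 1 forces λ = 1 + (γ−1)/(1 + (γ/(n−1))·(n·((n/(n−1))^{(n−1)(1−1/(γ−1))} − 1) + 1)). -/

import Mathlib

/-- Pure tail constraint (γ, 0): if f is the distribution that is 0 before t₁ = (n−1)/(γ−1),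
equals (λ−1)/(γ−1) at t₁, and grows geometrically after t₁, then Σ f = 1 forces
λ = 1 + (γ−1)/(1 + (γ/(n−1))·(n·((n/(n−1))^{(n−1)(1−1/(γ−1))} − 1) + 1)). -/
theorem stmt_18 (n γ : ℕ) (hn : 2 ≤ n) (hγ : 2 ≤ γ) (hdvd : (γ - 1) ∣ (n - 1))
    (t₁ : ℕ) (ht₁ : t₁ = (n - 1)/(γ - 1)) (lam : ℝ)
    (f : ℕ → ℝ)
    (hf0 : ∀ t, t < t₁ → f t = 0)
    (hft₁ : f t₁ = (lam - 1)/((γ:ℝ) - 1))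
    (hft : ∀ t, t₁ < t →
      f t = ((γ:ℝ)*(lam - 1)/(((n:ℝ) - 1)*((γ:ℝ) - 1))) * (1 + 1/((n:ℝ) - 1))^(t - t₁ - 1))
    (hsum : ∑ t ∈ Finset.Icc 1 n, f t = 1) :
    lam = 1 + ((γ:ℝ) - 1) /
      (1 + ((γ:ℝ)/((n:ℝ) - 1))
        * ((n:ℝ)*(((n:ℝ)/((n:ℝ) - 1))^(n - 1 - t₁) - 1) + 1)) := by
  have hN2 : (2:ℝ) ≤ (n:ℝ) := by exact_mod_cast hn
  have hG2 : (2:ℝ) ≤ (γ:ℝ) := by exact_mod_cast hγ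
  have hN1 : (0:ℝ) < (n:ℝ) - 1 := by linarith
  have hG1 : (0:ℝ) < (γ:ℝ) - 1 := by linarith
  have hγn : γ - 1 ≤ n - 1 := Nat.le_of_dvd (by omega) hdvd
  have ht₁1 : 1 ≤ t₁ := by
    rw [ht₁]; exact (Nat.one_le_div_iff (by omega)).2 hγn
  have ht₁n : t₁ ≤ n - 1 := by rw [ht₁]; exact Nat.div_le_self _ _
  set r : ℝ := 1 + 1/((n:ℝ) - 1) with hr
  have hr1 : 1 < r := by
    have : 0 < 1/((n:ℝ)-1) := by positivity
    simp [hr]; linarith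
  set c : ℝ := (γ:ℝ)*(lam - 1)/(((n:ℝ) - 1)*((γ:ℝ) - 1)) with hc
  -- split the sum
  have hsplit : ∑ t ∈ Finset.Icc 1 n, f t
      = f t₁ + ∑ i ∈ Finset.range (n - t₁), c * r ^ i := by
    have h1 : Finset.Icc 1 n = Finset.Ioc 0 n := by
      rw [← Finset.Icc_add_one_left_eq_Ioc]; rfl
    rw [h1, ← Finset.sum_Ioc_consecutive f (Nat.zero_le t₁) (by omega : t₁ ≤ n)]
    congr 1
    · rw [Finset.sum_eq_single t₁]
      · intro b hb hne
        exact hf0 b (lt_of_le_of_ne (Finset.mem_Ioc.1 hb).2 hne)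
      · intro h; exact absurd (Finset.mem_Ioc.2 ⟨by omega, le_refl t₁⟩) h
    · have h2 : Finset.Ioc t₁ n = Finset.Ico (t₁+1) (n+1) := by
        rw [← Finset.Icc_add_one_left_eq_Ioc, Finset.Ico_add_one_right_eq_Icc]
      rw [h2, Finset.sum_Ico_eq_sum_range]
      have h3 : n + 1 - (t₁ + 1) = n - t₁ := by omega
      rw [h3]
      apply Finset.sum_congr rfl
      intro i _
      rw [hft (t₁ + 1 + i) (by omega)]
      have : t₁ + 1 + i - t₁ - 1 = i := by omega
      rw [this]
  -- geometric sum
  have hrne : r ≠ 1 := ne_of_gt hr1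
  have hgeom : ∑ i ∈ Finset.range (n - t₁), c * r ^ i
      = c * ((r ^ (n - t₁) - 1)/(r - 1)) := by
    rw [← Finset.mul_sum, geom_sum_eq hrne]
  have hnt : n - t₁ = (n - 1 - t₁) + 1 := by omega
  set X : ℝ := r ^ (n - 1 - t₁) with hX
  have hpow : r ^ (n - t₁) = X * r := by rw [hnt, pow_succ]
  have hX1 : (1:ℝ) ≤ X := one_le_pow₀ (le_of_lt hr1)
  rw [hsplit, hgeom, hpow, hft₁] at hsum
  -- target denominator
  have hreq : (n:ℝ)/((n:ℝ)-1) = r := by rw [hr]; field_simp; ring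
  rw [hreq]
  set D : ℝ := 1 + ((γ:ℝ)/((n:ℝ) - 1)) * ((n:ℝ)*(X - 1) + 1) with hD
  have hDpos : 0 < D := by
    have h0 : 0 ≤ ((γ:ℝ)/((n:ℝ) - 1)) * ((n:ℝ)*(X - 1) + 1) := by
      apply mul_nonneg
      · positivity
      · nlinarith
    simp only [hD]; linarith
  have hpoly : (lam - 1) * (((n:ℝ)-1) + (γ:ℝ)*((n:ℝ)*(X - 1) + 1)) = ((γ:ℝ)-1)*((n:ℝ)-1) := by
    rw [hc, hr] at hsum
    field_simp at hsum
    refine mul_right_cancel₀ hG1.ne' ?_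
    linear_combination ((γ:ℝ) - 1) * hsum
  have hkey : (lam - 1) * D = (γ:ℝ) - 1 := by
    rw [hD]
    field_simp
    linear_combination hpoly
  have hlam : lam - 1 = ((γ:ℝ) - 1) / D := by
    rw [eq_div_iff hDpos.ne']; exact hkey
  linarith [hlam]
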